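/- Let A, B be (n,d)-types with CG(A,B) acyclic, A_j = B_j for j ≠ i, and set C = A ∪ B componentwise. Then every total refinement of A is a total refinement of C, and consequently the set of total refinements of C equals the union of the sets of total refinements of A and of B. -/

import Mathlib

open Finset

/-- An `(n,d)`-type: an `n`-tuple of subsets of `[d]`. -/
abbrev NDType (n d : ℕ) := Fin n → Finset (Fin d)

/-- All entries nonempty. -/
def IsType {n d : ℕ} (A : NDType n d) : Prop := ∀ i, (A i).Nonempty

/-- A directed edge `u → v` of the comparability graph `CG(A,B)`:
for some coordinate `i`, `u ∈ A i`, `v ∈ B i`, and not both lie in `A i ∩ B i`. -/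
def DirEdge {n d : ℕ} (A B : NDType n d) (u v : Fin d) : Prop :=
  u ≠ v ∧ ∃ i, u ∈ A i ∧ v ∈ B i ∧ ¬ (u ∈ A i ∩ B i ∧ v ∈ A i ∩ B i)

/-- An undirected edge of `CG(A,B)`: both endpoints lie in some `A i ∩ B i`. -/
def UndirEdge {n d : ℕ} (A B : NDType n d) (u v : Fin d) : Prop :=
  u ≠ v ∧ ∃ i, u ∈ A i ∩ B i ∧ v ∈ A i ∩ B i

/-- A step of a directed walk in `CG(A,B)`: a directed edge in the right
direction, or an undirected edge. -/
def Step {n d : ℕ} (A B : NDType n d) (u v : Fin d) : Prop :=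
  DirEdge A B u v ∨ UndirEdge A B u v

/-- `CG(A,B)` contains a directed cycle: a closed walk all of whose directed
edges point in the walk direction, with at least one directed edge. -/
def HasDirectedCycle {n d : ℕ} (A B : NDType n d) : Prop :=
  ∃ (k : ℕ) (v : Fin (k + 1) → Fin d),
    v 0 = v (Fin.last k) ∧
    (∀ i : Fin k, Step A B (v i.castSucc) (v i.succ)) ∧
    (∃ i : Fin k, DirEdge A B (v i.castSucc) (v i.succ))

/-- The comparability graph `CG(A,B)` is acyclic. -/
def Acyclic {n d : ℕ} (A B : NDType n d) : Prop := ¬ HasDirectedCycle A B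

/-- An ordered partition of `[d]` into `k` (nonempty, ordered) parts. -/
def IsOrderedPartition {d k : ℕ} (P : Fin k → Finset (Fin d)) : Prop :=
  (∀ a, (P a).Nonempty) ∧ (∀ a b, a ≠ b → Disjoint (P a) (P b)) ∧
    (∀ j : Fin d, ∃ a, j ∈ P a)

/-- `B` is the refinement `A|P` of `A` with respect to the ordered partition `P`:
`B i = A i ∩ P (m i)` where `m i` is the least index with nonempty intersection. -/
def IsRefinementBy {n d k : ℕ} (A : NDType n d) (P : Fin k → Finset (Fin d))
    (B : NDType n d) : Prop :=
  ∀ i, ∃ a, (A i ∩ P a).Nonempty ∧ (∀ b, b < a → A i ∩ P b = ∅) ∧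
    B i = A i ∩ P a

/-- `B` is a refinement of `A` (with respect to some ordered partition). -/
def IsRefinement {n d : ℕ} (B A : NDType n d) : Prop :=
  ∃ (k : ℕ) (P : Fin k → Finset (Fin d)),
    IsOrderedPartition P ∧ IsRefinementBy A P B

/-- A total refinement: a refinement all of whose entries are singletons. -/
def IsTotalRefinement {n d : ℕ} (B A : NDType n d) : Prop :=
  IsRefinement B A ∧ ∀ i, ∃ j, B i = {j}

/-- A tope: a type all of whose entries are singletons. -/
def IsTope {n d : ℕ} (A : NDType n d) : Prop := ∀ i, ∃ j, A i = {j}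
open Pointwise

/-- The `j`-th standard basis vector of `ℝ^d`. -/
noncomputable def stdVec {d : ℕ} (j : Fin d) : Fin d → ℝ := Pi.single j 1

/-- The Minkowski cell `C_A = Σᵢ conv{e_j : j ∈ A i} ⊆ ℝ^d` of an `(n,d)`-type. -/
noncomputable def cell {n d : ℕ} (A : NDType n d) : Set (Fin d → ℝ) :=
  ∑ i : Fin n, convexHull ℝ (stdVec '' (A i : Set (Fin d)))

/-- The dilated simplex `nΔ^{d-1} ⊆ ℝ^d`. -/
def dilSimplex (n d : ℕ) : Set (Fin d → ℝ) :=
  {x | (∀ j, 0 ≤ x j) ∧ ∑ j, x j = (n : ℝ)}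

/-- A mixed subdivision of `nΔ^{d-1}`, encoded by the set of types of its cells:
all entries of a cell type are nonempty, the family of cells is closed under
faces (= refinements), any two cells intersect in the Minkowski sum of the
intersections of their summands, and the cells cover `nΔ^{d-1}`. -/
structure MixedSubdivision (n d : ℕ) where
  cells : Set (NDType n d)
  isType : ∀ A ∈ cells, IsType A
  refine_closed : ∀ A ∈ cells, ∀ B, IsRefinement B A → B ∈ cells
  inter : ∀ A ∈ cells, ∀ B ∈ cells,
    cell A ∩ cell B = cell (fun i => A i ∩ B i)
  covers : ⋃ A ∈ cells, cell A = dilSimplex n d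

open Finset Relation

private lemma transGen_lt' {α β : Type*} [Preorder β] {r : α → α → Prop} {f : α → β}
    (h : ∀ a b, r a b → f a < f b) {x y : α} (hxy : TransGen r x y) : f x < f y := by
  induction hxy with
  | single e => exact h _ _ e
  | tail _ e ih => exact lt_trans ih (h _ _ e)

private lemma split_out' {α : Type*} {base S : α → α → Prop} (t₀ : α)
    (hS : ∀ a b, S a b → base a b ∨ a = t₀) {x y : α} (h : ReflTransGen S x y) :
    ReflTransGen base x y ∨ ReflTransGen base x t₀ := by
  induction h using ReflTransGen.head_induction_on with
  | refl => exact Or.inl ReflTransGen.refl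
  | head e _ ih =>
    rcases hS _ _ e with he | he
    · rcases ih with ih | ih
      · exact Or.inl (ReflTransGen.head he ih)
      · exact Or.inr (ReflTransGen.head he ih)
    · exact Or.inr (he ▸ ReflTransGen.refl)

private lemma cycle_split' {α : Type*} {base S : α → α → Prop} (t₀ : α) (Newp : α → Prop)
    (hS : ∀ a b, S a b → base a b ∨ (a = t₀ ∧ Newp b)) {x y : α}
    (h : TransGen S x y) :
    TransGen base x y ∨
      ∃ v, Newp v ∧ ReflTransGen S v y ∧ ReflTransGen base x t₀ := by
  induction h using TransGen.head_induction_on with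
  | single e =>
    rcases hS _ _ e with he | ⟨rfl, hn⟩
    · exact Or.inl (TransGen.single he)
    · exact Or.inr ⟨_, hn, ReflTransGen.refl, ReflTransGen.refl⟩
  | head e htg ih =>
    rcases hS _ _ e with he | ⟨rfl, hn⟩
    · rcases ih with ih | ⟨v, hv, h1, h2⟩
      · exact Or.inl (TransGen.head he ih)
      · exact Or.inr ⟨v, hv, h1, ReflTransGen.head he h2⟩
    · exact Or.inr ⟨_, hn, htg.to_reflTransGen, ReflTransGen.refl⟩

private lemma exists_walk' {α : Type*} {R : α → α → Prop} {a b : α}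
    (h : ReflTransGen R a b) :
    ∃ (m : ℕ) (f : Fin (m + 1) → α), f 0 = a ∧ f (Fin.last m) = b ∧
      ∀ i : Fin m, R (f i.castSucc) (f i.succ) := by
  induction h using ReflTransGen.head_induction_on with
  | refl => exact ⟨0, fun _ => b, rfl, rfl, fun i => i.elim0⟩
  | @head x c e _ ih =>
    obtain ⟨m, f, hf0, hfl, hfs⟩ := ih
    refine ⟨m + 1, Fin.cons x f, Fin.cons_zero _ _, ?_, ?_⟩
    · rw [← Fin.succ_last, Fin.cons_succ]; exact hfl
    · intro i
      induction i using Fin.cases with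
      | zero =>
        simpa [Fin.castSucc_zero, Fin.cons_zero, Fin.cons_succ, hf0] using e
      | succ j =>
        rw [← Fin.succ_castSucc, Fin.cons_succ, Fin.cons_succ]
        exact hfs j

open Relation

private lemma dirEdge_symm' {n d : ℕ} {A B : NDType n d} {u v : Fin d}
    (h : DirEdge A B u v) : DirEdge B A v u := by
  obtain ⟨hne, i, h1, h2, h3⟩ := h
  exact ⟨hne.symm, i, h2, h1, fun ⟨ha, hb⟩ => h3 ⟨by rwa [Finset.inter_comm] at hb,
    by rwa [Finset.inter_comm] at ha⟩⟩

private lemma undirEdge_symm' {n d : ℕ} {A B : NDType n d} {u v : Fin d}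
    (h : UndirEdge A B u v) : UndirEdge B A v u := by
  obtain ⟨hne, i, h1, h2⟩ := h
  exact ⟨hne.symm, i, by rwa [Finset.inter_comm] at h2, by rwa [Finset.inter_comm] at h1⟩

private lemma step_symm' {n d : ℕ} {A B : NDType n d} {u v : Fin d}
    (h : Step A B u v) : Step B A v u :=
  h.elim (fun h => Or.inl (dirEdge_symm' h)) (fun h => Or.inr (undirEdge_symm' h))

private lemma acyclic_symm' {n d : ℕ} {A B : NDType n d} (h : Acyclic A B) :
    Acyclic B A := by
  rintro ⟨k, v, hclosed, hsteps, i₁, hdir⟩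
  refine h ⟨k, fun j => v ⟨k - j.val, by omega⟩, ?_, ?_, ?_⟩
  · show v ⟨k - (0 : Fin (k+1)).val, by omega⟩ = v ⟨k - (Fin.last k).val, by omega⟩
    have h1 : (⟨k - (0 : Fin (k+1)).val, by omega⟩ : Fin (k+1)) = Fin.last k := by
      simp [Fin.ext_iff]
    have h2 : (⟨k - (Fin.last k).val, by omega⟩ : Fin (k+1)) = 0 := by
      simp [Fin.ext_iff]
    rw [h1, h2, hclosed]
  · intro i
    have hk : i.val < k := i.isLt
    show Step A B (v ⟨k - (i.castSucc).val, by omega⟩) (v ⟨k - (i.succ).val, by omega⟩)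
    have e1 : (⟨k - (i.castSucc).val, by omega⟩ : Fin (k+1)) =
        (⟨k - 1 - i.val, by omega⟩ : Fin k).succ := by
      simp [Fin.ext_iff]; omega
    have e2 : (⟨k - (i.succ).val, by omega⟩ : Fin (k+1)) =
        (⟨k - 1 - i.val, by omega⟩ : Fin k).castSucc := by
      simp [Fin.ext_iff]; omega
    rw [e1, e2]
    exact step_symm' (hsteps ⟨k - 1 - i.val, by omega⟩)
  · have hk : i₁.val < k := i₁.isLt
    refine ⟨⟨k - 1 - i₁.val, by omega⟩, ?_⟩
    show DirEdge A B (v ⟨k - ((⟨k - 1 - i₁.val, by omega⟩ : Fin k).castSucc).val, by omega⟩)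
      (v ⟨k - ((⟨k - 1 - i₁.val, by omega⟩ : Fin k).succ).val, by omega⟩)
    have e1 : (⟨k - ((⟨k - 1 - i₁.val, by omega⟩ : Fin k).castSucc).val, by omega⟩ : Fin (k+1)) =
        i₁.succ := by simp [Fin.ext_iff]; omega
    have e2 : (⟨k - ((⟨k - 1 - i₁.val, by omega⟩ : Fin k).succ).val, by omega⟩ : Fin (k+1)) =
        i₁.castSucc := by simp [Fin.ext_iff]; omega
    rw [e1, e2]
    exact dirEdge_symm' hdir

private lemma build_cycle' {n d : ℕ} {A B : NDType n d} {t₀ w : Fin d}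
    (hdir : DirEdge A B t₀ w)
    (hpath : ReflTransGen (fun a b => UndirEdge A B a b) w t₀) : HasDirectedCycle A B := by
  obtain ⟨m, f, hf0, hfl, hfs⟩ := exists_walk' hpath
  refine ⟨m + 1, Fin.cons t₀ f, ?_, ?_, ⟨0, ?_⟩⟩
  · rw [← Fin.succ_last, Fin.cons_succ, hfl, Fin.cons_zero]
  · intro i
    induction i using Fin.cases with
    | zero => simpa [Fin.cons_zero, Fin.cons_succ, hf0, Step] using Or.inl hdir
    | succ j =>
      rw [← Fin.succ_castSucc, Fin.cons_succ, Fin.cons_succ]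
      exact Or.inr (hfs j)
  · simpa [Fin.cons_zero, Fin.cons_succ, hf0] using hdir

private lemma key_step' {n d : ℕ} (A B : NDType n d)
    (h : Acyclic A B) (i₀ : Fin n) (hagree : ∀ j, j ≠ i₀ → A j = B j)
    (T : NDType n d) (hT : IsTotalRefinement T A) :
    IsTotalRefinement T (fun k => A k ∪ B k) := by
  classical
  obtain ⟨⟨kk, P, ⟨hPne, hPdisj, hPcov⟩, hRef⟩, hsing⟩ := hT
  choose t ht using hsing
  choose a ha1 ha2 ha3 using hRef
  have htP : ∀ k, t k ∈ A k ∩ P (a k) := by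
    intro k; rw [← ha3 k, ht k]; exact Finset.mem_singleton_self _
  have htA : ∀ k, t k ∈ A k := fun k => Finset.mem_of_mem_inter_left (htP k)
  choose wt hwt using hPcov
  have hwt_t : ∀ k, wt (t k) = a k := by
    intro k
    by_contra hne
    exact (Finset.disjoint_left.mp (hPdisj _ _ hne) (hwt (t k)))
      (Finset.mem_of_mem_inter_right (htP k))
  set DA : Fin d → Fin d → Prop := fun u v => ∃ k, u = t k ∧ v ∈ A k ∧ v ≠ t k with hDA_def
  set DC : Fin d → Fin d → Prop :=
    fun u v => ∃ k, u = t k ∧ v ∈ A k ∪ B k ∧ v ≠ t k with hDC_def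
  have hmono : ∀ u v, DA u v → wt u < wt v := by
    rintro u v ⟨k, rfl, hv, hvne⟩
    rw [hwt_t k]
    have h1 : ¬ wt v < a k := fun hlt => by
      have h2 := ha2 k _ hlt
      exact absurd (Finset.mem_inter.mpr ⟨hv, hwt v⟩)
        (by rw [h2]; exact Finset.notMem_empty _)
    have h2 : wt v ≠ a k := by
      intro heq
      apply hvne
      have h3 : v ∈ A k ∩ P (a k) := Finset.mem_inter.mpr ⟨hv, heq ▸ hwt v⟩
      rw [← ha3 k, ht k] at h3
      exact Finset.mem_singleton.mp h3
    exact lt_of_le_of_ne (not_lt.mp h1) (Ne.symm h2)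
  set t₀ := t i₀ with ht₀_def
  have hirr : ∀ x, ¬ TransGen DC x x := by
    intro x hx
    have hsplitC : ∀ u v, DC u v → DA u v ∨ (u = t₀ ∧ (v ∈ B i₀ ∧ v ∉ A i₀)) := by
      rintro u v ⟨k, rfl, hv, hvne⟩
      by_cases hk : k = i₀
      · subst hk
        by_cases hvA : v ∈ A k
        · exact Or.inl ⟨k, rfl, hvA, hvne⟩
        · exact Or.inr ⟨rfl, (Finset.mem_union.mp hv).resolve_left hvA, hvA⟩
      · rw [← hagree k hk, Finset.union_self] at hv
        exact Or.inl ⟨k, rfl, hv, hvne⟩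
    rcases cycle_split' t₀ (fun v => v ∈ B i₀ ∧ v ∉ A i₀) hsplitC hx with
      hcyc | ⟨v, ⟨hvB, hvA⟩, hvx, hxt⟩
    · exact absurd (transGen_lt' hmono hcyc) (lt_irrefl _)
    · have hDAC : ∀ u v, DA u v → DC u v := by
        rintro u v ⟨k, rfl, hv, hvne⟩
        exact ⟨k, rfl, Finset.mem_union_left _ hv, hvne⟩
      have hvt₀ : ReflTransGen DC v t₀ := hvx.trans (ReflTransGen.mono hDAC _ _ hxt)
      have hsplitC' : ∀ a b, DC a b → DA a b ∨ a = t₀ := fun a b hab =>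
        (hsplitC a b hab).imp id And.left
      have h1 : ReflTransGen DA v t₀ := by
        rcases split_out' t₀ hsplitC' hvt₀ with h' | h' <;> exact h'
      set D' : Fin d → Fin d → Prop :=
        fun u v => ∃ k, k ≠ i₀ ∧ u = t k ∧ v ∈ A k ∧ v ≠ t k with hD'_def
      have hsplitA : ∀ a b, DA a b → D' a b ∨ a = t₀ := by
        rintro u v ⟨k, rfl, hv, hvne⟩
        by_cases hk : k = i₀
        · exact Or.inr (by rw [hk])
        · exact Or.inl ⟨k, hk, rfl, hv, hvne⟩
      have h2 : ReflTransGen D' v t₀ := by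
        rcases split_out' t₀ hsplitA h1 with h' | h' <;> exact h'
      have hundir : ∀ u w, D' u w → UndirEdge A B u w := by
        rintro u w ⟨k, hk, rfl, hw, hwne⟩
        have hAB := hagree k hk
        exact ⟨Ne.symm hwne, k, Finset.mem_inter.mpr ⟨htA k, hAB ▸ htA k⟩,
          Finset.mem_inter.mpr ⟨hw, hAB ▸ hw⟩⟩
      have hdir : DirEdge A B t₀ v := by
        refine ⟨fun hc => hvA (by rw [← hc]; exact htA i₀), i₀, htA i₀, hvB, ?_⟩
        rintro ⟨-, hc⟩
        exact hvA (Finset.mem_of_mem_inter_left hc)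
      exact h (build_cycle' hdir (ReflTransGen.mono hundir _ _ h2))
  -- build a linear order compatible with DC
  set ord : Fin d → ℕ :=
    fun u => (Finset.univ.filter fun w => TransGen DC w u).card with hord_def
  have hord : ∀ u v, DC u v → ord u < ord v := by
    intro u v huv
    apply Finset.card_lt_card
    constructor
    · intro w hw
      rw [Finset.mem_filter] at hw ⊢
      exact ⟨Finset.mem_univ _, hw.2.tail huv⟩
    · intro hsub
      have h1 : u ∈ Finset.univ.filter fun w => TransGen DC w v :=
        Finset.mem_filter.mpr ⟨Finset.mem_univ _, TransGen.single huv⟩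
      have h2 := Finset.mem_filter.mp (hsub h1)
      exact hirr u h2.2
  set key : Fin d → ℕ := fun u => ord u * d + u.val with hkey_def
  have hkey : ∀ u v, DC u v → key u < key v := by
    intro u v huv
    have h1 : ord u < ord v := hord u v huv
    have h2 : u.val < d := u.isLt
    calc ord u * d + u.val < ord u * d + d := by omega
    _ = (ord u + 1) * d := by ring
    _ ≤ ord v * d := Nat.mul_le_mul_right d h1
    _ ≤ ord v * d + v.val := Nat.le_add_right _ _
  have hkeyinj : Function.Injective key := by
    intro u v huv
    have e : ∀ w : Fin d, (ord w * d + w.val) % d = w.val := by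
      intro w
      rw [Nat.mul_comm, Nat.mul_add_mod, Nat.mod_eq_of_lt w.isLt]
    have h2 : (ord u * d + u.val) % d = (ord v * d + v.val) % d := congrArg (· % d) huv
    rw [e u, e v] at h2
    exact Fin.ext h2
  set pos : Fin d → Fin d := fun u =>
    ⟨(Finset.univ.filter fun w => key w < key u).card, by
      have hsub : (Finset.univ.filter fun w => key w < key u) ⊆ Finset.univ.erase u := by
        intro w hw
        rw [Finset.mem_filter] at hw
        refine Finset.mem_erase.mpr ⟨fun hc => ?_, Finset.mem_univ _⟩
        rw [hc] at hw; exact lt_irrefl _ hw.2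
      have h1 := Finset.card_le_card hsub
      have h2 : (Finset.univ.erase u).card < Finset.univ.card :=
        Finset.card_erase_lt_of_mem (Finset.mem_univ u)
      have h3 : (Finset.univ : Finset (Fin d)).card = d := by simp
      omega⟩ with hpos_def
  have hposmono : ∀ u v, key u < key v → pos u < pos v := by
    intro u v huv
    have hss : (Finset.univ.filter fun w => key w < key u) ⊂
        (Finset.univ.filter fun w => key w < key v) := by
      constructor
      · intro w hw
        rw [Finset.mem_filter] at hw ⊢
        exact ⟨hw.1, lt_trans hw.2 huv⟩
      · intro hsub
        have hu : u ∈ Finset.univ.filter fun w => key w < key v :=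
          Finset.mem_filter.mpr ⟨Finset.mem_univ _, huv⟩
        exact lt_irrefl _ (Finset.mem_filter.mp (hsub hu)).2
    exact Fin.mk_lt_mk.mpr (Finset.card_lt_card hss)
  have hposinj : Function.Injective pos := by
    intro u v huv
    by_contra hne
    have hk : key u ≠ key v := fun hc => hne (hkeyinj hc)
    rcases lt_or_gt_of_ne hk with h' | h'
    · exact absurd huv (ne_of_lt (hposmono _ _ h'))
    · exact absurd huv.symm (ne_of_lt (hposmono _ _ h'))
  let σ : Fin d ≃ Fin d := Equiv.ofBijective pos (Finite.injective_iff_bijective.mp hposinj)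
  have hσsymm : ∀ u, σ.symm (σ u) = u := fun u => σ.symm_apply_apply u
  have hσ : ∀ u, σ u = pos u := fun u => rfl
  constructor
  · refine ⟨d, fun b => {σ.symm b}, ⟨fun b => Finset.singleton_nonempty _, ?_, ?_⟩, ?_⟩
    · intro b c hbc
      rw [Finset.disjoint_singleton]
      exact fun hc => hbc (σ.symm.injective hc)
    · intro j
      refine ⟨σ j, ?_⟩
      show j ∈ ({σ.symm (σ j)} : Finset (Fin d))
      rw [hσsymm j]
      exact Finset.mem_singleton_self _
    · intro k
      have htC : t k ∈ A k ∪ B k := Finset.mem_union_left _ (htA k)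
      refine ⟨σ (t k), ?_, ?_, ?_⟩
      · show ((A k ∪ B k) ∩ {σ.symm (σ (t k))}).Nonempty
        rw [hσsymm (t k)]
        exact ⟨t k, Finset.mem_inter.mpr ⟨htC, Finset.mem_singleton_self _⟩⟩
      · intro b hb
        rw [Finset.eq_empty_iff_forall_notMem]
        intro x hx
        rw [Finset.mem_inter, Finset.mem_singleton] at hx
        obtain ⟨hx1, hx2⟩ := hx
        have hx1' : x ∈ A k ∪ B k := hx1
        subst hx2
        by_cases hxt : σ.symm b = t k
        · rw [← hxt, Equiv.apply_symm_apply] at hb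
          exact lt_irrefl _ hb
        · have hedge : DC (t k) (σ.symm b) := ⟨k, rfl, hx1', hxt⟩
          have h1 : pos (t k) < pos (σ.symm b) := hposmono _ _ (hkey _ _ hedge)
          have h2 : σ (σ.symm b) = b := Equiv.apply_symm_apply σ b
          have h3 : pos (σ.symm b) = b := by rw [← hσ, h2]
          have h4 : σ (t k) = pos (t k) := hσ _
          rw [h4] at hb
          rw [h3] at h1
          exact lt_irrefl _ (lt_trans h1 hb)
      · show T k = (A k ∪ B k) ∩ {σ.symm (σ (t k))}
        rw [hσsymm (t k), Finset.inter_singleton_of_mem htC, ht k]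
  · exact fun k => ⟨t k, ht k⟩

/-- If `CG(A,B)` is acyclic and `A`, `B` agree in all
coordinates except possibly `i`, then every total refinement of `A` is a total
refinement of `C = A ∪ B`, and the total refinements of `C` are exactly the
total refinements of `A` together with those of `B`. -/
theorem total_refinements_of_union {n d : ℕ} (A B : NDType n d)
    (hA : IsType A) (hB : IsType B) (h : Acyclic A B)
    (i : Fin n) (hagree : ∀ j, j ≠ i → A j = B j) :
    (∀ T, IsTotalRefinement T A → IsTotalRefinement T (fun k => A k ∪ B k)) ∧
    (∀ T, IsTotalRefinement T (fun k => A k ∪ B k) ↔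
      (IsTotalRefinement T A ∨ IsTotalRefinement T B)) := by
  classical
  have part1 : ∀ T, IsTotalRefinement T A → IsTotalRefinement T (fun k => A k ∪ B k) :=
    fun T hT => key_step' A B h i hagree T hT
  refine ⟨part1, fun T => ⟨?_, ?_⟩⟩
  · rintro ⟨⟨kk, P, hP, hRef⟩, hsing⟩
    choose t ht using hsing
    choose a ha1 ha2 ha3 using hRef
    have hmemC : ∀ k, t k ∈ (A k ∪ B k) ∩ P (a k) := by
      intro k
      have h3 : T k = (A k ∪ B k) ∩ P (a k) := ha3 k
      rw [ht k] at h3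
      exact h3 ▸ Finset.mem_singleton_self (t k)
    have hCsing : ∀ k, (A k ∪ B k) ∩ P (a k) = {t k} := by
      intro k
      have h3 : T k = (A k ∪ B k) ∩ P (a k) := ha3 k
      rw [ht k] at h3
      exact h3.symm
    have mkRef : ∀ (X : NDType n d), (∀ k, X k ⊆ A k ∪ B k) → (∀ k, t k ∈ X k) →
        IsTotalRefinement T X := by
      intro X hXsub hXt
      refine ⟨⟨kk, P, hP, fun k => ⟨a k, ?_, ?_, ?_⟩⟩, fun k => ⟨t k, ht k⟩⟩
      · exact ⟨t k, Finset.mem_inter.mpr ⟨hXt k,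
          Finset.mem_of_mem_inter_right (hmemC k)⟩⟩
      · intro b hb
        have h0 : (A k ∪ B k) ∩ P b = ∅ := ha2 k b hb
        rw [← Finset.subset_empty, ← h0]
        exact Finset.inter_subset_inter_right (hXsub k)
      · refine Finset.Subset.antisymm ?_ ?_ |>.symm
        · calc X k ∩ P (a k) ⊆ (A k ∪ B k) ∩ P (a k) :=
              Finset.inter_subset_inter_right (hXsub k)
          _ = {t k} := hCsing k
          _ = T k := (ht k).symm
        · rw [ht k, Finset.singleton_subset_iff]
          exact Finset.mem_inter.mpr ⟨hXt k, Finset.mem_of_mem_inter_right (hmemC k)⟩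
      
    have hti : t i ∈ A i ∨ t i ∈ B i :=
      Finset.mem_union.mp (Finset.mem_of_mem_inter_left (hmemC i))
    rcases hti with hti | hti
    · refine Or.inl (mkRef A (fun k => Finset.subset_union_left) ?_)
      intro k
      by_cases hk : k = i
      · subst hk; exact hti
      · have hmem := Finset.mem_of_mem_inter_left (hmemC k)
        rwa [← hagree k hk, Finset.union_self] at hmem
    · refine Or.inr (mkRef B (fun k => Finset.subset_union_right) ?_)
      intro k
      by_cases hk : k = i
      · subst hk; exact hti
      · have hmem := Finset.mem_of_mem_inter_left (hmemC k)
        rwa [hagree k hk, Finset.union_self] at hmem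
  · rintro (hTA | hTB)
    · exact part1 T hTA
    · have h2 := key_step' B A (acyclic_symm' h) i (fun j hj => (hagree j hj).symm) T hTB
      have e : (fun k => B k ∪ A k) = (fun k => A k ∪ B k) :=
        funext fun k => Finset.union_comm _ _
      rwa [e] at h2
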